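/- arXiv:0704.3825 — 3 statements merged into one kernel-verified Lean document; each statement's English description precedes it below -/
import Mathlib

section
/- Let ε > 0 and let α, β : ℝ → ℍ be complete geodesics in the hyperbolic plane that cross transversely (Set.range α ≠ Set.range β and Set.range α ∩ Set.range β ≠ ∅). Let I = {t | dist(α(t), Set.range β) ≤ 2ε} and J = {t | dist(β(t), Set.range α) ≤ 2ε}. Then the diameters of I and J (as subsets of ℝ) differ by at most 4ε: |diam I − diam J| ≤ 4ε. -/
open UpperHalfPlane Metric Set

private lemma trap_map (ε : ℝ) (hε : 0 < ε)
    (α β : ℝ → UpperHalfPlane)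
    (hβ : ∀ s t : ℝ, dist (β s) (β t) = |s - t|)
    {t : ℝ} (ht : Metric.infDist (α t) (Set.range β) ≤ 2 * ε) :
    ∃ s, dist (α t) (β s) ≤ 2 * ε ∧ Metric.infDist (β s) (Set.range α) ≤ 2 * ε := by
  have hiso : Isometry β := Isometry.of_dist_eq fun s t => by rw [hβ, Real.dist_eq]
  have hclosed : IsClosed (Set.range β) := hiso.isClosedEmbedding.isClosed_range
  obtain ⟨y, hy, hyd⟩ := hclosed.exists_infDist_eq_dist ⟨β 0, mem_range_self 0⟩ (α t)
  obtain ⟨s, rfl⟩ := hy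
  refine ⟨s, by rw [← hyd]; exact ht, ?_⟩
  calc Metric.infDist (β s) (Set.range α) ≤ dist (β s) (α t) :=
        Metric.infDist_le_dist_of_mem (mem_range_self t)
    _ = dist (α t) (β s) := dist_comm _ _
    _ ≤ 2 * ε := by rw [← hyd]; exact ht

private lemma trap_bounded (ε : ℝ) (hε : 0 < ε)
    (α β : ℝ → UpperHalfPlane)
    (hα : ∀ s t : ℝ, dist (α s) (α t) = |s - t|)
    (hβ : ∀ s t : ℝ, dist (β s) (β t) = |s - t|)
    (hJ : Bornology.IsBounded {t : ℝ | Metric.infDist (β t) (Set.range α) ≤ 2 * ε}) :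
    Bornology.IsBounded {t : ℝ | Metric.infDist (α t) (Set.range β) ≤ 2 * ε} := by
  obtain ⟨C, hC⟩ := Metric.isBounded_iff.1 hJ
  rw [Metric.isBounded_iff]
  refine ⟨2 * ε + C + 2 * ε, fun x hx y hy => ?_⟩
  obtain ⟨s, hs1, hs2⟩ := trap_map ε hε α β hβ hx
  obtain ⟨s', hs1', hs2'⟩ := trap_map ε hε α β hβ hy
  have : dist (α x) (α y) ≤ 2 * ε + C + 2 * ε := by
    calc dist (α x) (α y) ≤ dist (α x) (β s) + dist (β s) (β s') + dist (β s') (α y) :=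
          dist_triangle4 _ _ _ _
      _ ≤ 2 * ε + C + 2 * ε := by
          have h1 : dist (β s) (β s') ≤ C := by
            rw [hβ, ← Real.dist_eq]; exact hC hs2 hs2'
          have h2 : dist (β s') (α y) ≤ 2 * ε := by rw [dist_comm]; exact hs1'
          linarith
  rwa [hα, ← Real.dist_eq] at this

private lemma trap_diam_le (ε : ℝ) (hε : 0 < ε)
    (α β : ℝ → UpperHalfPlane)
    (hα : ∀ s t : ℝ, dist (α s) (α t) = |s - t|)
    (hβ : ∀ s t : ℝ, dist (β s) (β t) = |s - t|)
    (hJ : Bornology.IsBounded {t : ℝ | Metric.infDist (β t) (Set.range α) ≤ 2 * ε}) :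
    Metric.diam {t : ℝ | Metric.infDist (α t) (Set.range β) ≤ 2 * ε} ≤
      Metric.diam {t : ℝ | Metric.infDist (β t) (Set.range α) ≤ 2 * ε} + 4 * ε := by
  refine Metric.diam_le_of_forall_dist_le
    (add_nonneg Metric.diam_nonneg (by linarith)) ?_
  intro x hx y hy
  obtain ⟨s, hs1, hs2⟩ := trap_map ε hε α β hβ hx
  obtain ⟨s', hs1', hs2'⟩ := trap_map ε hε α β hβ hy
  have h1 : dist (β s) (β s') ≤ Metric.diam {t : ℝ | Metric.infDist (β t) (Set.range α) ≤ 2 * ε} := by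
    have := Metric.dist_le_diam_of_mem hJ hs2 hs2'
    calc dist (β s) (β s') = |s - s'| := hβ s s'
      _ = dist s s' := (Real.dist_eq _ _).symm
      _ ≤ _ := this
  have : dist (α x) (α y) ≤ dist (α x) (β s) + dist (β s) (β s') + dist (β s') (α y) :=
    dist_triangle4 _ _ _ _
  rw [hα, ← Real.dist_eq] at this
  have h2 : dist (β s') (α y) ≤ 2 * ε := by rw [dist_comm]; exact hs1'
  linarith

theorem trap_intervals_diam_close
    (ε : ℝ) (hε : 0 < ε)
    (α β : ℝ → UpperHalfPlane)
    (hα : ∀ s t : ℝ, dist (α s) (α t) = |s - t|)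
    (hβ : ∀ s t : ℝ, dist (β s) (β t) = |s - t|)
    (hne : Set.range α ≠ Set.range β)
    (hint : (Set.range α ∩ Set.range β).Nonempty) :
    |Metric.diam {t : ℝ | Metric.infDist (α t) (Set.range β) ≤ 2 * ε} -
        Metric.diam {t : ℝ | Metric.infDist (β t) (Set.range α) ≤ 2 * ε}| ≤ 4 * ε := by
  set I := {t : ℝ | Metric.infDist (α t) (Set.range β) ≤ 2 * ε} with hI
  set J := {t : ℝ | Metric.infDist (β t) (Set.range α) ≤ 2 * ε} with hJ
  by_cases hb : Bornology.IsBounded J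
  · have hbI : Bornology.IsBounded I := trap_bounded ε hε α β hα hβ hb
    have h1 := trap_diam_le ε hε α β hα hβ hb
    have h2 := trap_diam_le ε hε β α hβ hα hbI
    rw [abs_sub_le_iff]
    constructor <;> linarith
  · have hbI : ¬ Bornology.IsBounded I := fun h => hb (trap_bounded ε hε β α hβ hα h)
    rw [Metric.diam_eq_zero_of_unbounded hb, Metric.diam_eq_zero_of_unbounded hbI]
    simp
    linarith
end

section
/- Let ε > 0 and let Γ be a subgroup of the isometry group of the hyperbolic plane ℍ with systole greater than 8ε, i.e. dist(x, g·x) > 8ε for every x ∈ ℍ and every g ∈ Γ with g ≠ 1. Let α, β : ℝ → ℍ be complete geodesics that cross transversely (Set.range α ≠ Set.range β and Set.range α ∩ Set.range β ≠ ∅), let ℓ > 0, and suppose there exist a, b ∈ Γ with a·α(t) = α(t + ℓ) and b·β(t) = β(t + ℓ) for all t ∈ ℝ. Then for all s, t ∈ ℝ with dist(α(s), Set.range β) ≤ 2ε and dist(α(t), Set.range β) ≤ 2ε, one has |s − t| < ℓ + 4ε. -/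
open UpperHalfPlane Real

noncomputable section TrapAux

/-- Hyperboloid-model coordinates of a point of `ℍ`. -/
def Z0 (z : ℍ) : ℝ := (z.re ^ 2 + z.im ^ 2 + 1) / (2 * z.im)
def Z1 (z : ℍ) : ℝ := (z.re ^ 2 + z.im ^ 2 - 1) / (2 * z.im)
def Z2 (z : ℍ) : ℝ := z.re / z.im

/-- Minkowski pairing; equals `cosh (dist z w)`. -/
def MK (z w : ℍ) : ℝ := Z0 z * Z0 w - Z1 z * Z1 w - Z2 z * Z2 w

lemma MK_comm (z w : ℍ) : MK z w = MK w z := by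
  unfold MK Z0 Z1 Z2; ring

lemma cosh_dist'' (z w : ℍ) :
    Real.cosh (dist z w) = ((z.re - w.re) ^ 2 + z.im ^ 2 + w.im ^ 2) / (2 * z.im * w.im) := by
  rw [UpperHalfPlane.cosh_dist, Complex.dist_eq_re_im, Real.sq_sqrt (by positivity)]
  have h1 : (z : ℂ).re = z.re := rfl
  have h2 : (z : ℂ).im = z.im := rfl
  have h3 : (w : ℂ).re = w.re := rfl
  have h4 : (w : ℂ).im = w.im := rfl
  rw [h1, h2, h3, h4]
  have hz := z.im_pos
  have hw := w.im_pos
  field_simp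
  ring

lemma MK_eq_cosh (z w : ℍ) : MK z w = Real.cosh (dist z w) := by
  rw [cosh_dist'']
  have hz := z.im_pos
  have hw := w.im_pos
  unfold MK Z0 Z1 Z2
  field_simp
  ring

lemma MK_self (z : ℍ) : MK z z = 1 := by
  rw [MK_eq_cosh, dist_self, Real.cosh_zero]

lemma one_le_MK (z w : ℍ) : 1 ≤ MK z w := by
  rw [MK_eq_cosh]; exact Real.one_le_cosh _

lemma Z_inj {z w : ℍ} (h0 : Z0 z = Z0 w) (h1 : Z1 z = Z1 w) (h2 : Z2 z = Z2 w) : z = w := by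
  have key : ∀ v : ℍ, (Z0 v - Z1 v) * v.im = 1 := by
    intro v
    have hv := v.im_pos
    unfold Z0 Z1
    field_simp
    norm_num
  have hz := z.im_pos
  have hw := w.im_pos
  have hne : Z0 z - Z1 z ≠ 0 := by
    intro h
    have := key z
    rw [h] at this
    simp at this
  have him : z.im = w.im := by
    have e1 := key z
    have e2 := key w
    rw [← h0, ← h1] at e2
    exact mul_left_cancel₀ hne (by rw [e1, e2])
  have hre : z.re = w.re := by
    unfold Z2 at h2
    rw [him] at h2
    field_simp at h2
    exact h2
  exact UpperHalfPlane.ext_re_im hre him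

/-- sum-of-squares kernel lemma. -/
lemma sos_kernel {u0 u1 u2 w0 w1 w2 : ℝ} (hu : u0 ^ 2 = 1 + u1 ^ 2 + u2 ^ 2)
    (h1 : w0 * u0 = w1 * u1 + w2 * u2) (h2 : w0 ^ 2 = w1 ^ 2 + w2 ^ 2) :
    w0 = 0 ∧ w1 = 0 ∧ w2 = 0 := by
  have h4 : (w0 * u0) ^ 2 = (w1 * u1 + w2 * u2) ^ 2 := by rw [h1]
  have h5 : w1 ^ 2 + w2 ^ 2 + (w1 * u2 - w2 * u1) ^ 2 = 0 := by
    linear_combination -((1 + u1 ^ 2 + u2 ^ 2) * h2) + h4 - w0 ^ 2 * hu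
  have hw1 : w1 = 0 := by nlinarith [sq_nonneg w1, sq_nonneg w2, sq_nonneg (w1 * u2 - w2 * u1)]
  have hw2 : w2 = 0 := by nlinarith [sq_nonneg w1, sq_nonneg w2, sq_nonneg (w1 * u2 - w2 * u1)]
  have hw0 : w0 = 0 := by nlinarith [h2]
  exact ⟨hw0, hw1, hw2⟩

/-- Core: midpoint relation in hyperboloid coordinates. -/
lemma core {x y m : ℍ} {c : ℝ}
    (h1 : MK x m = c) (h2 : MK y m = c) (h3 : MK x y = 2 * c ^ 2 - 1) :
    Z0 x + Z0 y = 2 * c * Z0 m ∧ Z1 x + Z1 y = 2 * c * Z1 m ∧ Z2 x + Z2 y = 2 * c * Z2 m := by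
  have hm := MK_self m
  have hx := MK_self x
  have hy := MK_self y
  set u0 := Z0 m; set u1 := Z1 m; set u2 := Z2 m
  set w0 := Z0 x + Z0 y - 2 * c * u0 with hw0def
  set w1 := Z1 x + Z1 y - 2 * c * u1 with hw1def
  set w2 := Z2 x + Z2 y - 2 * c * u2 with hw2def
  have hu : u0 ^ 2 = 1 + u1 ^ 2 + u2 ^ 2 := by
    unfold MK at hm; linear_combination hm
  have k1 : w0 * u0 = w1 * u1 + w2 * u2 := by
    unfold MK at h1 h2 hm
    linear_combination h1 + h2 - 2 * c * hm
  have k2 : w0 ^ 2 = w1 ^ 2 + w2 ^ 2 := by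
    unfold MK at h1 h2 h3 hm hx hy
    linear_combination hx + hy + 2 * h3 - 4 * c * h1 - 4 * c * h2 + 4 * c ^ 2 * hm
  obtain ⟨e0, e1, e2⟩ := sos_kernel hu k1 k2
  refine ⟨by linarith [hw0def ▸ e0], by linarith [hw1def ▸ e1], by linarith [hw2def ▸ e2]⟩

lemma cosh_double (r : ℝ) : Real.cosh (2 * r) = 2 * Real.cosh r ^ 2 - 1 := by
  rw [Real.cosh_two_mul, Real.cosh_sq]
  ring

/-- Midpoint coordinates relation, from metric data. -/
lemma midpoint_coords {x y m : ℍ} {r : ℝ}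
    (h1 : dist x m = r) (h2 : dist y m = r) (h3 : dist x y = 2 * r) :
    Z0 x + Z0 y = 2 * Real.cosh r * Z0 m ∧
    Z1 x + Z1 y = 2 * Real.cosh r * Z1 m ∧
    Z2 x + Z2 y = 2 * Real.cosh r * Z2 m := by
  apply core
  · rw [MK_eq_cosh, h1]
  · rw [MK_eq_cosh, h2]
  · rw [MK_eq_cosh, h3, cosh_double]

lemma midpt_unique {x y m m' : ℍ} {r : ℝ}
    (h1 : dist x m = r) (h2 : dist y m = r) (h3 : dist x y = 2 * r)
    (h1' : dist x m' = r) (h2' : dist y m' = r) : m = m' := by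
  obtain ⟨e0, e1, e2⟩ := midpoint_coords h1 h2 h3
  obtain ⟨f0, f1, f2⟩ := midpoint_coords h1' h2' h3
  have hc : (0 : ℝ) < 2 * Real.cosh r := by
    have := Real.one_le_cosh r
    linarith
  apply Z_inj
  · exact mul_left_cancel₀ (ne_of_gt hc) (by linarith)
  · exact mul_left_cancel₀ (ne_of_gt hc) (by linarith)
  · exact mul_left_cancel₀ (ne_of_gt hc) (by linarith)

/-- A geodesic's hyperboloid coordinates satisfy the cosh functional equation. -/
lemma geodesic_coords_FE {γ : ℝ → ℍ} (hγ : ∀ s t : ℝ, dist (γ s) (γ t) = |s - t|)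
    (u δ : ℝ) :
    Z0 (γ (u + δ)) + Z0 (γ (u - δ)) = 2 * Real.cosh δ * Z0 (γ u) ∧
    Z1 (γ (u + δ)) + Z1 (γ (u - δ)) = 2 * Real.cosh δ * Z1 (γ u) ∧
    Z2 (γ (u + δ)) + Z2 (γ (u - δ)) = 2 * Real.cosh δ * Z2 (γ u) := by
  have h1 : dist (γ (u + δ)) (γ u) = |δ| := by rw [hγ]; congr 1; ring
  have h2 : dist (γ (u - δ)) (γ u) = |δ| := by rw [hγ]; rw [abs_sub_comm]; congr 1; ring
  have h3 : dist (γ (u + δ)) (γ (u - δ)) = 2 * |δ| := by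
    rw [hγ]
    have : u + δ - (u - δ) = 2 * δ := by ring
    rw [this, abs_mul]
    norm_num
  have := midpoint_coords h1 h2 h3
  rwa [Real.cosh_abs] at this

/-- FE for the pairing against a fixed point. -/
lemma geodesic_MK_FE {γ : ℝ → ℍ} (hγ : ∀ s t : ℝ, dist (γ s) (γ t) = |s - t|)
    (z : ℍ) (u δ : ℝ) :
    MK (γ (u + δ)) z + MK (γ (u - δ)) z = 2 * Real.cosh δ * MK (γ u) z := by
  obtain ⟨e0, e1, e2⟩ := geodesic_coords_FE hγ u δ
  unfold MK
  linear_combination Z0 z * e0 - Z1 z * e1 - Z2 z * e2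

/-- Density lemma: a closed, midpoint-closed set containing an arithmetic
progression (two-sided) is everything. -/
lemma closed_midpoint_dense {E : Set ℝ} (hE : IsClosed E) {p L : ℝ} (hL : 0 < L)
    (hmem : ∀ n : ℤ, p + n * L ∈ E)
    (hmid : ∀ x ∈ E, ∀ y ∈ E, (x + y) / 2 ∈ E) : ∀ t, t ∈ E := by
  have step1 : ∀ n : ℕ, ∀ k : ℤ, p + k * (L / 2 ^ n) ∈ E := by
    intro n
    induction n with
    | zero => intro k; simpa using hmem k
    | succ n ih =>
      intro k
      rcases Int.even_or_odd k with ⟨j, hj⟩ | ⟨j, hj⟩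
      · have : p + (k : ℝ) * (L / 2 ^ (n + 1)) = p + (j : ℝ) * (L / 2 ^ n) := by
          subst hj
          push_cast
          ring
        rw [this]
        exact ih j
      · have h := hmid _ (ih j) _ (ih (j + 1))
        have : (p + (j : ℝ) * (L / 2 ^ n) + (p + ((j : ℤ) + 1 : ℤ) * (L / 2 ^ n))) / 2
            = p + (k : ℝ) * (L / 2 ^ (n + 1)) := by
          subst hj
          push_cast
          ring
        rwa [this] at h
  intro t
  rw [← hE.closure_eq]
  rw [Metric.mem_closure_iff]
  intro ε hε
  obtain ⟨n, hn⟩ := pow_unbounded_of_one_lt (L / ε) (by norm_num : (1:ℝ) < 2)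
  have hstep : 0 < L / 2 ^ n := by positivity
  have hstepε : L / 2 ^ n < ε := by
    rw [div_lt_iff₀ (by positivity)]
    calc L = (L / ε) * ε := by field_simp
    _ < 2 ^ n * ε := by
        apply mul_lt_mul_of_pos_right hn hε
    _ = ε * 2 ^ n := by ring
  set k := ⌊(t - p) / (L / 2 ^ n)⌋ with hk
  refine ⟨p + k * (L / 2 ^ n), step1 n k, ?_⟩
  have h1 : (k : ℝ) ≤ (t - p) / (L / 2 ^ n) := Int.floor_le _
  have h2 : (t - p) / (L / 2 ^ n) < k + 1 := Int.lt_floor_add_one _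
  rw [Real.dist_eq, abs_lt]
  constructor
  · nlinarith [mul_le_mul_of_nonneg_right h1 (le_of_lt hstep), (div_mul_cancel₀ (t-p) (ne_of_gt hstep))]
  · nlinarith [mul_lt_mul_of_pos_right h2 hstep, (div_mul_cancel₀ (t-p) (ne_of_gt hstep))]

lemma isometric_continuous {γ : ℝ → ℍ} (hγ : ∀ s t : ℝ, dist (γ s) (γ t) = |s - t|) :
    Continuous γ := by
  have : Isometry γ := Isometry.of_dist_eq (fun a b => by rw [hγ, Real.dist_eq])
  exact this.continuous

/-- Two geodesics agreeing on a two-sided arithmetic progression agree everywhere. -/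
lemma geodesic_ext {γ δ : ℝ → ℍ}
    (hγ : ∀ s t : ℝ, dist (γ s) (γ t) = |s - t|)
    (hδ : ∀ s t : ℝ, dist (δ s) (δ t) = |s - t|)
    {p L : ℝ} (hL : 0 < L)
    (h : ∀ n : ℤ, γ (p + n * L) = δ (p + n * L)) : ∀ t, γ t = δ t := by
  have hE : IsClosed {t : ℝ | γ t = δ t} :=
    isClosed_eq (isometric_continuous hγ) (isometric_continuous hδ)
  refine closed_midpoint_dense hE hL h ?_
  intro x hx y hy
  have hx' : γ x = δ x := hx
  have hy' : γ y = δ y := hy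
  have habs : ∀ r : ℝ, |r / 2| = |r| / 2 := fun r => by rw [abs_div, abs_two]
  set m := (x + y) / 2 with hm
  have hxm : x - m = (x - y) / 2 := by rw [hm]; ring
  have hym : y - m = -((x - y) / 2) := by rw [hm]; ring
  have e1 : dist (γ x) (γ m) = |x - y| / 2 := by rw [hγ, hxm, habs]
  have e2 : dist (γ y) (γ m) = |x - y| / 2 := by rw [hγ, hym, abs_neg, habs]
  have e3 : dist (γ x) (γ y) = 2 * (|x - y| / 2) := by rw [hγ]; ring
  have e1' : dist (γ x) (δ m) = |x - y| / 2 := by rw [hx', hδ, hxm, habs]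
  have e2' : dist (γ y) (δ m) = |x - y| / 2 := by rw [hy', hδ, hym, abs_neg, habs]
  exact midpt_unique e1 e2 e3 e1' e2'

/-- Functional-equation lemma: continuous solutions of the cosh FE are
exponential combinations. -/
lemma FE_exp {g : ℝ → ℝ} (hg : Continuous g)
    (hFE : ∀ u δ : ℝ, g (u + δ) + g (u - δ) = 2 * Real.cosh δ * g u) :
    ∃ c₁ c₂ : ℝ, ∀ u, g u = c₁ * Real.exp u + c₂ * Real.exp (-u) := by
  have hlt : Real.exp (-1) < Real.exp 1 := Real.exp_lt_exp.mpr (by norm_num)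
  have hD : Real.exp 1 - Real.exp (-1) ≠ 0 := sub_ne_zero.mpr (ne_of_gt hlt)
  set c₁ := (g 1 - g 0 * Real.exp (-1)) / (Real.exp 1 - Real.exp (-1)) with hc₁
  set c₂ := (g 0 * Real.exp 1 - g 1) / (Real.exp 1 - Real.exp (-1)) with hc₂
  refine ⟨c₁, c₂, ?_⟩
  set d := fun u => g u - (c₁ * Real.exp u + c₂ * Real.exp (-u)) with hd
  have hexpFE : ∀ u δ : ℝ, Real.exp (u + δ) + Real.exp (u - δ)
      = 2 * Real.cosh δ * Real.exp u := by
    intro u δ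
    rw [Real.cosh_eq, Real.exp_add, Real.exp_sub, Real.exp_neg]
    have := Real.exp_ne_zero δ
    field_simp
  have hdFE : ∀ u δ : ℝ, d (u + δ) + d (u - δ) = 2 * Real.cosh δ * d u := by
    intro u δ
    simp only [hd]
    have h1 := hexpFE u δ
    have h2 : Real.exp (-(u + δ)) + Real.exp (-(u - δ)) = 2 * Real.cosh δ * Real.exp (-u) := by
      have h3 := hexpFE (-u) (-δ)
      rw [Real.cosh_neg] at h3
      rw [show -(u+δ) = -u + -δ by ring, show -(u-δ) = -u - -δ by ring]
      exact h3
    linear_combination hFE u δ - c₁ * h1 - c₂ * h2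
  have hd0 : d 0 = 0 := by
    simp only [hd, hc₁, hc₂]
    rw [Real.exp_zero, neg_zero, Real.exp_zero]
    field_simp
    ring
  have hd1 : d 1 = 0 := by
    simp only [hd, hc₁, hc₂]
    field_simp
    ring
  have hdcont : Continuous d := by
    simp only [hd]
    continuity
  have hEc : IsClosed {t : ℝ | d t = 0} := isClosed_eq hdcont continuous_const
  have key : ∀ n : ℤ, d (n : ℝ) = 0 ∧ d ((n : ℝ) + 1) = 0 := by
    intro n
    induction n using Int.induction_on with
    | zero => exact ⟨by simpa using hd0, by norm_num; exact hd1⟩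
    | succ k ih =>
      push_cast at ih ⊢
      have h := hdFE ((k : ℝ) + 1) 1
      rw [show (k:ℝ) + 1 + 1 = (k:ℝ) + 2 by ring, show (k:ℝ) + 1 - 1 = (k:ℝ) by ring,
        ih.1, ih.2] at h
      have h2 : d ((k:ℝ) + 2) = 0 := by linarith [h]
      exact ⟨ih.2, by rw [show (k:ℝ) + 1 + 1 = (k:ℝ) + 2 by ring]; exact h2⟩
    | pred k ih =>
      push_cast at ih ⊢
      have h := hdFE (-(k : ℝ)) 1
      rw [show -(k:ℝ) + 1 = -(k:ℝ) + 1 by ring, ih.1, ih.2] at h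
      have h2 : d (-(k:ℝ) - 1) = 0 := by linarith [h]
      constructor
      · rw [show -(k:ℝ) - 1 = -(k:ℝ) - 1 by ring]
        exact h2
      · rw [show -(k:ℝ) - 1 + 1 = -(k:ℝ) by ring]
        exact ih.1
  have hmem : ∀ n : ℤ, (0 : ℝ) + n * 1 ∈ {t : ℝ | d t = 0} := by
    intro n
    have := (key n).1
    simpa using this
  have hmid : ∀ x ∈ {t : ℝ | d t = 0}, ∀ y ∈ {t : ℝ | d t = 0},
      (x + y) / 2 ∈ {t : ℝ | d t = 0} := by
    intro x hx y hy
    have h := hdFE ((x + y) / 2) ((y - x) / 2)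
    rw [show (x + y) / 2 + (y - x) / 2 = y by ring,
      show (x + y) / 2 - (y - x) / 2 = x by ring] at h
    have hx' : d x = 0 := hx
    have hy' : d y = 0 := hy
    rw [hx', hy'] at h
    have hc := Real.cosh_pos ((y - x) / 2)
    have hmz : d ((x + y) / 2) = 0 := by
      by_contra hne
      rcases lt_or_gt_of_ne hne with h1 | h1 <;> nlinarith
    exact hmz
  have hall := closed_midpoint_dense hEc one_pos hmem hmid
  intro u
  have hu := hall u
  simp only [hd, Set.mem_setOf_eq] at hu
  linarith

/-- If `x e^w + y e^{-w} ≥ 1` for all `w`, then `x, y > 0`. -/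
lemma coeff_pos {x y : ℝ} (h : ∀ w : ℝ, 1 ≤ x * Real.exp w + y * Real.exp (-w)) :
    0 < x ∧ 0 < y := by
  have hx : ∀ x' y' : ℝ, (∀ w : ℝ, 1 ≤ x' * Real.exp w + y' * Real.exp (-w)) → 0 < x' := by
    intro x' y' h'
    by_contra hx'
    push_neg at hx'
    have hy' : 0 < y' := by
      have h0 := h' 0
      rw [Real.exp_zero, neg_zero, Real.exp_zero] at h0
      nlinarith
    have hw := h' (Real.log (2 * y'))
    rw [Real.exp_log (by linarith), Real.exp_neg, Real.exp_log (by linarith)] at hw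
    have hx'e : x' * (2 * y') ≤ 0 := mul_nonpos_of_nonpos_of_nonneg hx' (by linarith)
    have : y' * (2 * y')⁻¹ = 1 / 2 := by
      field_simp
    nlinarith
  refine ⟨hx x y h, hx y x ?_⟩
  intro w
  have := h (-w)
  rwa [neg_neg, add_comm] at this

/-- If `x e^u + y e^{-u} ≥ 0` for all `u`, then `x, y ≥ 0`. -/
lemma coeff_nonneg {x y : ℝ} (h : ∀ w : ℝ, 0 ≤ x * Real.exp w + y * Real.exp (-w)) :
    0 ≤ x ∧ 0 ≤ y := by
  have key : ∀ t : ℝ, 0 < t → 0 < x + t ∧ 0 < y + t := by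
    intro t ht
    have h' : ∀ w : ℝ, 1 ≤ ((x + t) / (2 * t)) * Real.exp w + ((y + t) / (2 * t)) * Real.exp (-w) := by
      intro w
      have h1 := h w
      have hprod : Real.exp w * Real.exp (-w) = 1 := by
        rw [← Real.exp_add]
        simp
      have h2 : Real.exp w + Real.exp (-w) ≥ 2 := by
        nlinarith [sq_nonneg (Real.exp w - 1), hprod, Real.exp_pos (-w)]
      have hrw : ((x + t) / (2 * t)) * Real.exp w + ((y + t) / (2 * t)) * Real.exp (-w)
          = ((x + t) * Real.exp w + (y + t) * Real.exp (-w)) / (2 * t) := by ring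
      rw [hrw, le_div_iff₀ (by linarith)]
      nlinarith [h1, h2]
    have hpos := coeff_pos h'
    have h2t : (0:ℝ) < 2 * t := by linarith
    constructor
    · rcases div_pos_iff.mp hpos.1 with ⟨h1, _⟩ | ⟨_, h2⟩
      · exact h1
      · linarith
    · rcases div_pos_iff.mp hpos.2 with ⟨h1, _⟩ | ⟨_, h2⟩
      · exact h1
      · linarith
  constructor
  · by_contra hx
    push_neg at hx
    have := (key (-x / 2) (by linarith)).1
    linarith
  · by_contra hy
    push_neg at hy
    have := (key (-y / 2) (by linarith)).2
    linarith

lemma contZ0 : Continuous Z0 := by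
  unfold Z0
  exact (((continuous_re.pow 2).add (continuous_im.pow 2)).add continuous_const).div
    (continuous_const.mul continuous_im) (fun z => by have := z.im_pos; positivity)

lemma contZ1 : Continuous Z1 := by
  unfold Z1
  exact (((continuous_re.pow 2).add (continuous_im.pow 2)).sub continuous_const).div
    (continuous_const.mul continuous_im) (fun z => by have := z.im_pos; positivity)

lemma contZ2 : Continuous Z2 := by
  unfold Z2
  exact continuous_re.div continuous_im (fun z => ne_of_gt z.im_pos)

lemma contMK {γ : ℝ → ℍ} (h : Continuous γ) (z : ℍ) :
    Continuous (fun u => MK (γ u) z) := by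
  unfold MK
  exact (((contZ0.comp h).mul continuous_const).sub ((contZ1.comp h).mul continuous_const)).sub
    ((contZ2.comp h).mul continuous_const)

set_option maxHeartbeats 2000000 in
/-- Key convexity step: if a geodesic `α` is within `ε'` of the complete geodesic
`β` at times `s` and `t`, it is within `ε'` at any intermediate time. -/
lemma convexity_step {α β : ℝ → ℍ}
    (hα : ∀ s t : ℝ, dist (α s) (α t) = |s - t|)
    (hβ : ∀ s t : ℝ, dist (β s) (β t) = |s - t|)
    {ε' : ℝ} (hε' : 0 ≤ ε') {s t u : ℝ} (hsu : s ≤ u) (hut : u ≤ t)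
    (hs : Metric.infDist (α s) (Set.range β) ≤ ε')
    (ht : Metric.infDist (α t) (Set.range β) ≤ ε') :
    ∃ w, dist (α u) (β w) ≤ ε' := by
  classical
  set F : ℝ → ℝ → ℝ := fun v w => MK (α v) (β w) with hF
  have hFcosh : ∀ v w, F v w = Real.cosh (dist (α v) (β w)) := fun v w => MK_eq_cosh _ _
  have hF1 : ∀ v w, 1 ≤ F v w := fun v w => by rw [hFcosh]; exact Real.one_le_cosh _
  have hFEw : ∀ v w δ, F v (w + δ) + F v (w - δ) = 2 * Real.cosh δ * F v w := by
    intro v w δ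
    simp only [hF, MK_comm (α v)]
    exact geodesic_MK_FE hβ (α v) w δ
  have hFEu : ∀ w v δ, F (v + δ) w + F (v - δ) w = 2 * Real.cosh δ * F v w := by
    intro w v δ
    exact geodesic_MK_FE hα (β w) v δ
  have hcontα := isometric_continuous hα
  have hcontβ := isometric_continuous hβ
  have hcontw : ∀ v, Continuous (fun w => F v w) := by
    intro v
    simp only [hF]
    have : (fun w => MK (α v) (β w)) = fun w => MK (β w) (α v) := by
      funext w
      exact MK_comm _ _
    rw [this]
    exact contMK hcontβ (α v)
  have hcontu : ∀ w, Continuous (fun v => F v w) := fun w => contMK hcontα (β w)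
  -- coefficient functions
  have hlt : Real.exp (-1) < Real.exp 1 := Real.exp_lt_exp.mpr (by norm_num)
  have hD : Real.exp 1 - Real.exp (-1) ≠ 0 := sub_ne_zero.mpr (ne_of_gt hlt)
  set c1f : ℝ → ℝ := fun v => (F v 1 - F v 0 * Real.exp (-1)) / (Real.exp 1 - Real.exp (-1))
    with hc1f
  set c2f : ℝ → ℝ := fun v => (F v 0 * Real.exp 1 - F v 1) / (Real.exp 1 - Real.exp (-1))
    with hc2f
  have hrep : ∀ v w, F v w = c1f v * Real.exp w + c2f v * Real.exp (-w) := by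
    intro v
    obtain ⟨c₁, c₂, hc⟩ := FE_exp (hcontw v) (hFEw v)
    have h0 := hc 0
    have h1 := hc 1
    rw [Real.exp_zero, neg_zero, Real.exp_zero, mul_one, mul_one] at h0
    have e1 : c1f v = c₁ := by
      rw [hc1f]
      simp only
      rw [h0, h1]
      field_simp
      ring
    have e2 : c2f v = c₂ := by
      rw [hc2f]
      simp only
      rw [h0, h1]
      field_simp
      ring
    intro w
    rw [e1, e2]
    exact hc w
  have hc12pos : ∀ v, 0 < c1f v ∧ 0 < c2f v := by
    intro v
    apply coeff_pos
    intro w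
    rw [← hrep]
    exact hF1 v w
  -- the foot / argmin of distance to β
  have foot : ∀ v : ℝ, ∃ w, (∀ w', dist (α v) (β w) ≤ dist (α v) (β w')) ∧
      Real.cosh (dist (α v) (β w)) ^ 2 = 4 * (c1f v * c2f v) := by
    intro v
    obtain ⟨hcp1, hcp2⟩ := hc12pos v
    set w := (Real.log (c2f v) - Real.log (c1f v)) / 2 with hw
    have hX : Real.exp w * Real.exp w = c2f v / c1f v := by
      rw [← Real.exp_add, show w + w = Real.log (c2f v) - Real.log (c1f v) by rw [hw]; ring,
        Real.exp_sub, Real.exp_log hcp2, Real.exp_log hcp1]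
    have hY : Real.exp (-w) * Real.exp (-w) = c1f v / c2f v := by
      rw [← Real.exp_add, show -w + -w = Real.log (c1f v) - Real.log (c2f v) by rw [hw]; ring,
        Real.exp_sub, Real.exp_log hcp1, Real.exp_log hcp2]
    have hXY : Real.exp w * Real.exp (-w) = 1 := by
      rw [← Real.exp_add]
      simp
    have hX' : c1f v * (Real.exp w * Real.exp w) = c2f v := by
      rw [hX]
      field_simp
    have hY' : c2f v * (Real.exp (-w) * Real.exp (-w)) = c1f v := by
      rw [hY]
      field_simp
    have hFw2 : F v w ^ 2 = 4 * (c1f v * c2f v) := by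
      rw [hrep v w]
      linear_combination c1f v * hX' + c2f v * hY' + 2 * (c1f v * c2f v) * hXY
    have hmin : ∀ w', F v w ≤ F v w' := by
      intro w'
      have hXY' : Real.exp w' * Real.exp (-w') = 1 := by
        rw [← Real.exp_add]
        simp
      have h2 := hrep v w'
      have h4 : (F v w') ^ 2 = (c1f v * Real.exp w' - c2f v * Real.exp (-w')) ^ 2
          + 4 * (c1f v * c2f v) := by
        rw [h2]
        linear_combination 4 * (c1f v * c2f v) * hXY'
      nlinarith [h4, sq_nonneg (c1f v * Real.exp w' - c2f v * Real.exp (-w')), hFw2,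
        hF1 v w, hF1 v w']
    refine ⟨w, ?_, ?_⟩
    · intro w'
      have hc := hmin w'
      rw [hFcosh v w, hFcosh v w'] at hc
      have := Real.cosh_le_cosh.mp hc
      rwa [abs_of_nonneg dist_nonneg, abs_of_nonneg dist_nonneg] at this
    · rw [← hFcosh]
      exact hFw2
  have hβne : (Set.range β).Nonempty := ⟨β 0, 0, rfl⟩
  have footdist : ∀ v : ℝ, ∀ w : ℝ, (∀ w', dist (α v) (β w) ≤ dist (α v) (β w')) →
      dist (α v) (β w) ≤ Metric.infDist (α v) (Set.range β) := by
    intro v w hmin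
    by_contra hlt
    push_neg at hlt
    obtain ⟨y, hy, hylt⟩ := (Metric.infDist_lt_iff hβne).mp hlt
    obtain ⟨w', rfl⟩ := hy
    exact absurd hylt (not_lt.mpr (hmin w'))
  obtain ⟨ws, hwsmin, hws2⟩ := foot s
  obtain ⟨wt, hwtmin, hwt2⟩ := foot t
  have hdists : dist (α s) (β ws) ≤ ε' := le_trans (footdist s ws hwsmin) hs
  have hdistt : dist (α t) (β wt) ≤ ε' := le_trans (footdist t wt hwtmin) ht
  have hcoshs : Real.cosh (dist (α s) (β ws)) ≤ Real.cosh ε' := by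
    rw [← Real.cosh_abs (dist (α s) (β ws)), ← Real.cosh_abs ε']
    apply Real.cosh_le_cosh.mpr
    rw [abs_abs, abs_abs, abs_of_nonneg dist_nonneg, abs_of_nonneg hε']
    exact hdists
  have hcosht : Real.cosh (dist (α t) (β wt)) ≤ Real.cosh ε' := by
    rw [← Real.cosh_abs (dist (α t) (β wt)), ← Real.cosh_abs ε']
    apply Real.cosh_le_cosh.mpr
    rw [abs_abs, abs_abs, abs_of_nonneg dist_nonneg, abs_of_nonneg hε']
    exact hdistt
  have hKs : 4 * (c1f s * c2f s) ≤ Real.cosh ε' ^ 2 := by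
    rw [← hws2]
    nlinarith [Real.cosh_pos (dist (α s) (β ws)), Real.cosh_pos ε', hcoshs]
  have hKt : 4 * (c1f t * c2f t) ≤ Real.cosh ε' ^ 2 := by
    rw [← hwt2]
    nlinarith [Real.cosh_pos (dist (α t) (β wt)), Real.cosh_pos ε', hcosht]
  -- exponential form of coefficient functions
  have hc1FE : ∀ v δ : ℝ, c1f (v + δ) + c1f (v - δ) = 2 * Real.cosh δ * c1f v := by
    intro v δ
    simp only [hc1f]
    have h1 := hFEu 1 v δ
    have h0 := hFEu 0 v δ
    linear_combination (h1 - Real.exp (-1) * h0) / (Real.exp 1 - Real.exp (-1))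
  have hc2FE : ∀ v δ : ℝ, c2f (v + δ) + c2f (v - δ) = 2 * Real.cosh δ * c2f v := by
    intro v δ
    simp only [hc2f]
    have h1 := hFEu 1 v δ
    have h0 := hFEu 0 v δ
    linear_combination (Real.exp 1 * h0 - h1) / (Real.exp 1 - Real.exp (-1))
  have hc1cont : Continuous c1f := by
    simp only [hc1f]
    exact ((hcontu 1).sub ((hcontu 0).mul continuous_const)).div_const _
  have hc2cont : Continuous c2f := by
    simp only [hc2f]
    exact (((hcontu 0).mul continuous_const).sub (hcontu 1)).div_const _
  obtain ⟨a1, a2, ha⟩ := FE_exp hc1cont hc1FE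
  obtain ⟨b1, b2, hb⟩ := FE_exp hc2cont hc2FE
  obtain ⟨ha1, ha2⟩ := coeff_nonneg (x := a1) (y := a2)
    (fun v => by rw [← ha v]; exact (hc12pos v).1.le)
  obtain ⟨hb1, hb2⟩ := coeff_nonneg (x := b1) (y := b2)
    (fun v => by rw [← hb v]; exact (hc12pos v).2.le)
  have hP : ∀ v, 4 * (c1f v * c2f v) = 4 * (a1 * b1) * Real.exp (2 * v)
      + 4 * (a2 * b2) * Real.exp (-(2 * v)) + 4 * (a1 * b2 + a2 * b1) := by
    intro v
    have hXY : Real.exp v * Real.exp (-v) = 1 := by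
      rw [← Real.exp_add]
      simp
    rw [ha v, hb v, show (2:ℝ) * v = v + v by ring, show -(v + v) = -v + -v by ring,
      Real.exp_add, Real.exp_add]
    linear_combination 4 * (a1 * b2 + a2 * b1) * hXY
  rcases eq_or_lt_of_le (le_trans hsu hut) with heq | hst
  · have hus : u = s := le_antisymm (heq ▸ hut) hsu
    exact ⟨ws, by rw [hus]; exact hdists⟩
  · set lam := (t - u) / (t - s) with hlam
    set mu := (u - s) / (t - s) with hmu
    have hts : 0 < t - s := by linarith
    have hlam0 : 0 ≤ lam := div_nonneg (by linarith) (by linarith)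
    have hmu0 : 0 ≤ mu := div_nonneg (by linarith) (by linarith)
    have hsum : lam + mu = 1 := by
      rw [hlam, hmu]
      field_simp [hts.ne']
      ring
    have harg1 : lam * (2 * s) + mu * (2 * t) = 2 * u := by
      rw [hlam, hmu]
      field_simp [hts.ne']
      ring
    have harg2 : lam * (-(2 * s)) + mu * (-(2 * t)) = -(2 * u) := by
      rw [hlam, hmu]
      field_simp [hts.ne']
      ring
    have hconv1 : Real.exp (2 * u) ≤ lam * Real.exp (2 * s) + mu * Real.exp (2 * t) := by
      have h := convexOn_exp.2 (Set.mem_univ (2 * s)) (Set.mem_univ (2 * t)) hlam0 hmu0 hsum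
      simp only [smul_eq_mul] at h
      rwa [harg1] at h
    have hconv2 : Real.exp (-(2 * u)) ≤ lam * Real.exp (-(2 * s)) + mu * Real.exp (-(2 * t)) := by
      have h := convexOn_exp.2 (Set.mem_univ (-(2 * s))) (Set.mem_univ (-(2 * t))) hlam0 hmu0 hsum
      simp only [smul_eq_mul] at h
      rwa [harg2] at h
    have hA : (0:ℝ) ≤ 4 * (a1 * b1) := by positivity
    have hB : (0:ℝ) ≤ 4 * (a2 * b2) := by positivity
    have hPu : 4 * (c1f u * c2f u) ≤ Real.cosh ε' ^ 2 := by
      have hKs2 : 4 * (a1 * b1) * Real.exp (2 * s) + 4 * (a2 * b2) * Real.exp (-(2 * s))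
          + 4 * (a1 * b2 + a2 * b1) ≤ Real.cosh ε' ^ 2 := by
        rw [← hP s]
        exact hKs
      have hKt2 : 4 * (a1 * b1) * Real.exp (2 * t) + 4 * (a2 * b2) * Real.exp (-(2 * t))
          + 4 * (a1 * b2 + a2 * b1) ≤ Real.cosh ε' ^ 2 := by
        rw [← hP t]
        exact hKt
      have hKs' := mul_le_mul_of_nonneg_left hKs2 hlam0
      have hKt' := mul_le_mul_of_nonneg_left hKt2 hmu0
      have t1 := mul_le_mul_of_nonneg_left hconv1 hA
      have t2 := mul_le_mul_of_nonneg_left hconv2 hB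
      have hCsum : 4 * (a1 * b2 + a2 * b1) * lam + 4 * (a1 * b2 + a2 * b1) * mu
          = 4 * (a1 * b2 + a2 * b1) := by
        linear_combination (4 * (a1 * b2 + a2 * b1)) * hsum
      have hK2sum : lam * Real.cosh ε' ^ 2 + mu * Real.cosh ε' ^ 2 = Real.cosh ε' ^ 2 := by
        linear_combination (Real.cosh ε' ^ 2) * hsum
      rw [hP u]
      ring_nf at hKs' hKt' t1 t2 hCsum hK2sum ⊢
      linarith [hKs', hKt', t1, t2, hCsum, hK2sum]
    obtain ⟨wu, hwumin, hwu2⟩ := foot u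
    have hcoshu : Real.cosh (dist (α u) (β wu)) ≤ Real.cosh ε' := by
      nlinarith [hwu2, hPu, Real.cosh_pos (dist (α u) (β wu)), Real.cosh_pos ε']
    have habs := Real.cosh_le_cosh.mp hcoshu
    rw [abs_of_nonneg (dist_nonneg (x := α u) (y := β wu)), abs_of_nonneg hε'] at habs
    exact ⟨wu, habs⟩

set_option maxHeartbeats 1000000 in
/-- Main auxiliary lemma: ordered version, deriving a contradiction. -/
lemma trap_aux
    (ε : ℝ) (hε : 0 < ε)
    (Γ : Subgroup (UpperHalfPlane ≃ᵢ UpperHalfPlane))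
    (hsys : ∀ (x : UpperHalfPlane), ∀ g ∈ Γ, g ≠ 1 → 8 * ε < dist x (g x))
    (α β : ℝ → UpperHalfPlane)
    (hα : ∀ s t : ℝ, dist (α s) (α t) = |s - t|)
    (hβ : ∀ s t : ℝ, dist (β s) (β t) = |s - t|)
    (hne : Set.range α ≠ Set.range β)
    (hint : (Set.range α ∩ Set.range β).Nonempty)
    (ℓ : ℝ) (hℓ : 0 < ℓ)
    (a : UpperHalfPlane ≃ᵢ UpperHalfPlane) (ha : a ∈ Γ)
    (haα : ∀ t : ℝ, a (α t) = α (t + ℓ))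
    (b : UpperHalfPlane ≃ᵢ UpperHalfPlane) (hb : b ∈ Γ)
    (hbβ : ∀ t : ℝ, b (β t) = β (t + ℓ))
    (s t : ℝ) (hst : s ≤ t)
    (h1 : Metric.infDist (α s) (Set.range β) ≤ 2 * ε)
    (h2 : Metric.infDist (α t) (Set.range β) ≤ 2 * ε)
    (hcon : ℓ + 4 * ε ≤ t - s) : False := by
  -- basic facts
  have hε2 : (0:ℝ) ≤ 2 * ε := by linarith
  have ha1 : a ≠ 1 := by
    intro h
    have h0 := haα 0
    rw [h] at h0
    simp only [IsometryEquiv.coe_one, id_eq] at h0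
    have : dist (α 0) (α (0 + ℓ)) = ℓ := by
      rw [hα]
      rw [show (0:ℝ) - (0 + ℓ) = -ℓ by ring, abs_neg, abs_of_pos hℓ]
    rw [← h0, dist_self] at this
    linarith
  have hℓ8 : 8 * ε < ℓ := by
    have h8 := hsys (α 0) a ha ha1
    rw [haα 0] at h8
    rw [hα] at h8
    rw [show (0:ℝ) - (0 + ℓ) = -ℓ by ring, abs_neg, abs_of_pos hℓ] at h8
    exact h8
  -- two close points at parameters s and s + ℓ
  obtain ⟨w1, hw1⟩ := convexity_step hα hβ hε2 (le_refl s) hst h1 h2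
  obtain ⟨w2, hw2⟩ := convexity_step hα hβ hε2 (by linarith : s ≤ s + ℓ)
    (by linarith : s + ℓ ≤ t) h1 h2
  have hαdist : dist (α s) (α (s + ℓ)) = ℓ := by
    rw [hα, show s - (s + ℓ) = -ℓ by ring, abs_neg, abs_of_pos hℓ]
  have htri_low : ℓ - 4 * ε ≤ |w1 - w2| := by
    rw [← hβ]
    have t1 := dist_triangle (α s) (β w1) (β w2)
    have t2 := dist_triangle (β w1) (β w2) (α (s + ℓ))
    have t3 := dist_triangle (α s) (β w2) (α (s + ℓ))
    have t4 := dist_triangle (α s) (β w1) (α (s + ℓ))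
    have hc : dist (β w2) (α (s + ℓ)) = dist (α (s + ℓ)) (β w2) := dist_comm _ _
    linarith [dist_triangle (α s) (β w1) (β w2), dist_triangle (α s) (β w2) (α (s+ℓ)),
      hαdist ▸ (by linarith [t1, t3, hc] :
        ℓ - 4*ε ≤ dist (β w1) (β w2) + (dist (α s) (β w1) + dist (α (s+ℓ)) (β w2)) - 4*ε)]
  have htri_high : |w1 - w2| ≤ ℓ + 4 * ε := by
    rw [← hβ]
    have t1 := dist_triangle (β w1) (α s) (β w2)
    have t2 := dist_triangle (α s) (α (s + ℓ)) (β w2)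
    have hc1 : dist (β w1) (α s) = dist (α s) (β w1) := dist_comm _ _
    linarith [hαdist]
  -- establish a = b or a = b⁻¹ via the systole bound
  rcases le_or_gt w1 w2 with hcase | hcase
  · -- w1 ≤ w2 : compare a with b
    have habs : w2 - w1 = |w1 - w2| := by
      rw [abs_sub_comm, abs_of_nonneg (by linarith)]
    have hmid : dist (β w2) (β (w1 + ℓ)) ≤ 4 * ε := by
      rw [hβ, abs_le]
      constructor <;> nlinarith [htri_low, htri_high, habs]
    set g := a⁻¹ * b with hg
    have hgΓ : g ∈ Γ := mul_mem (inv_mem ha) hb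
    have hgdist : dist (α s) (g (α s)) ≤ 8 * ε := by
      have hgapp : g (α s) = a⁻¹ (b (α s)) := rfl
      rw [hgapp, ← IsometryEquiv.dist_eq a, IsometryEquiv.apply_inv_self, haα s]
      have hlast : dist (β (w1 + ℓ)) (b (α s)) ≤ 2 * ε := by
        rw [← hbβ w1, IsometryEquiv.dist_eq, dist_comm]
        exact hw1
      calc dist (α (s + ℓ)) (b (α s))
          ≤ dist (α (s + ℓ)) (β w2) + dist (β w2) (β (w1 + ℓ))
            + dist (β (w1 + ℓ)) (b (α s)) := dist_triangle4 _ _ _ _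
        _ ≤ 2 * ε + 4 * ε + 2 * ε := by gcongr
        _ = 8 * ε := by ring
    have hg1 : g = 1 := by
      by_contra hne1
      exact absurd hgdist (not_le.mpr (hsys (α s) g hgΓ hne1))
    have hab : a = b := by
      rwa [hg, inv_mul_eq_one] at hg1
    -- geodesics coincide: contradiction
    obtain ⟨x0, ⟨u0, hu0⟩, ⟨v0, hv0⟩⟩ := hint
    have hbase : α u0 = β v0 := by rw [hu0, hv0]
    have chain : ∀ n : ℤ, α (u0 + n * ℓ) = β (v0 + n * ℓ) := by
      intro n
      induction n using Int.induction_on with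
      | zero => simpa using hbase
      | succ k ih =>
        push_cast at ih ⊢
        have e1 : α (u0 + (k + 1) * ℓ) = a (α (u0 + k * ℓ)) := by
          rw [haα]
          congr 1
          ring
        rw [e1, ih, hab, hbβ]
        congr 1
        ring
      | pred k ih =>
        push_cast at ih ⊢
        have e1 : a (α (u0 + (-k - 1) * ℓ)) = α (u0 + -k * ℓ) := by
          rw [haα]
          congr 1
          ring
        have e2 : b (β (v0 + (-k - 1) * ℓ)) = β (v0 + -k * ℓ) := by
          rw [hbβ]
          congr 1
          ring
        apply a.injective
        rw [e1, ih, hab, e2]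
    have hall : ∀ r : ℝ, α (u0 + r) = β (v0 + r) := by
      have hγ : ∀ s' t' : ℝ, dist (α (u0 + s')) (α (u0 + t')) = |s' - t'| := by
        intro s' t'
        rw [hα]
        congr 1
        ring
      have hδ : ∀ s' t' : ℝ, dist (β (v0 + s')) (β (v0 + t')) = |s' - t'| := by
        intro s' t'
        rw [hβ]
        congr 1
        ring
      have hmem : ∀ n : ℤ, α (u0 + ((0:ℝ) + n * ℓ)) = β (v0 + ((0:ℝ) + n * ℓ)) := by
        intro n
        rw [show (0:ℝ) + n * ℓ = n * ℓ by ring]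
        exact chain n
      exact geodesic_ext hγ hδ hℓ hmem
    apply hne
    ext z
    constructor
    · rintro ⟨r, rfl⟩
      refine ⟨v0 + (r - u0), ?_⟩
      rw [← hall (r - u0)]
      congr 1
      ring
    · rintro ⟨r, rfl⟩
      refine ⟨u0 + (r - v0), ?_⟩
      rw [hall (r - v0)]
      congr 1
      ring
  · -- w2 < w1 : compare a with b⁻¹
    have habs : w1 - w2 = |w1 - w2| := by
      rw [abs_of_nonneg (by linarith)]
    have hmid : dist (β w2) (β (w1 - ℓ)) ≤ 4 * ε := by
      rw [hβ, abs_le]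
      constructor <;> nlinarith [htri_low, htri_high, habs]
    have hbinv : ∀ r : ℝ, b⁻¹ (β r) = β (r - ℓ) := by
      intro r
      have h := hbβ (r - ℓ)
      rw [show r - ℓ + ℓ = r by ring] at h
      rw [← h, IsometryEquiv.inv_apply_self]
    set g := a⁻¹ * b⁻¹ with hg
    have hgΓ : g ∈ Γ := mul_mem (inv_mem ha) (inv_mem hb)
    have hgdist : dist (α s) (g (α s)) ≤ 8 * ε := by
      have hgapp : g (α s) = a⁻¹ (b⁻¹ (α s)) := rfl
      rw [hgapp, ← IsometryEquiv.dist_eq a, IsometryEquiv.apply_inv_self, haα s]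
      have hlast : dist (β (w1 - ℓ)) (b⁻¹ (α s)) ≤ 2 * ε := by
        rw [← hbinv w1, IsometryEquiv.dist_eq, dist_comm]
        exact hw1
      calc dist (α (s + ℓ)) (b⁻¹ (α s))
          ≤ dist (α (s + ℓ)) (β w2) + dist (β w2) (β (w1 - ℓ))
            + dist (β (w1 - ℓ)) (b⁻¹ (α s)) := dist_triangle4 _ _ _ _
        _ ≤ 2 * ε + 4 * ε + 2 * ε := by gcongr
        _ = 8 * ε := by ring
    have hg1 : g = 1 := by
      by_contra hne1
      exact absurd hgdist (not_le.mpr (hsys (α s) g hgΓ hne1))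
    have hab : a = b⁻¹ := by
      rwa [hg, inv_mul_eq_one] at hg1
    obtain ⟨x0, ⟨u0, hu0⟩, ⟨v0, hv0⟩⟩ := hint
    have hbase : α u0 = β v0 := by rw [hu0, hv0]
    have chain : ∀ n : ℤ, α (u0 + n * ℓ) = β (v0 - n * ℓ) := by
      intro n
      induction n using Int.induction_on with
      | zero => simpa using hbase
      | succ k ih =>
        push_cast at ih ⊢
        have e1 : α (u0 + (k + 1) * ℓ) = a (α (u0 + k * ℓ)) := by
          rw [haα]
          congr 1
          ring
        have e2 : b⁻¹ (β (v0 - k * ℓ)) = β (v0 - (k + 1) * ℓ) := by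
          rw [hbinv]
          congr 1
          ring
        rw [e1, ih, hab, e2]
      | pred k ih =>
        push_cast at ih ⊢
        have e1 : a (α (u0 + (-k - 1) * ℓ)) = α (u0 + -k * ℓ) := by
          rw [haα]
          congr 1
          ring
        have e2 : b⁻¹ (β (v0 - (-k - 1) * ℓ)) = β (v0 - -k * ℓ) := by
          rw [hbinv]
          congr 1
          ring
        apply a.injective
        rw [e1, ih, hab, e2]
    have hall : ∀ r : ℝ, α (u0 + r) = β (v0 - r) := by
      have hγ : ∀ s' t' : ℝ, dist (α (u0 + s')) (α (u0 + t')) = |s' - t'| := by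
        intro s' t'
        rw [hα]
        congr 1
        ring
      have hδ : ∀ s' t' : ℝ, dist (β (v0 - s')) (β (v0 - t')) = |s' - t'| := by
        intro s' t'
        rw [hβ, show v0 - s' - (v0 - t') = t' - s' by ring, abs_sub_comm]
      have hmem : ∀ n : ℤ, α (u0 + ((0:ℝ) + n * ℓ)) = β (v0 - ((0:ℝ) + n * ℓ)) := by
        intro n
        rw [show (0:ℝ) + n * ℓ = n * ℓ by ring]
        exact chain n
      exact geodesic_ext hγ hδ hℓ hmem
    apply hne
    ext z
    constructor
    · rintro ⟨r, rfl⟩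
      refine ⟨v0 - (r - u0), ?_⟩
      rw [← hall (r - u0)]
      congr 1
      ring
    · rintro ⟨r, rfl⟩
      refine ⟨u0 + (v0 - r), ?_⟩
      rw [hall (v0 - r)]
      congr 1
      ring

end TrapAux

theorem trap_length_bound
    (ε : ℝ) (hε : 0 < ε)
    (Γ : Subgroup (UpperHalfPlane ≃ᵢ UpperHalfPlane))
    (hsys : ∀ (x : UpperHalfPlane), ∀ g ∈ Γ, g ≠ 1 → 8 * ε < dist x (g x))
    (α β : ℝ → UpperHalfPlane)
    (hα : ∀ s t : ℝ, dist (α s) (α t) = |s - t|)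
    (hβ : ∀ s t : ℝ, dist (β s) (β t) = |s - t|)
    (hne : Set.range α ≠ Set.range β)
    (hint : (Set.range α ∩ Set.range β).Nonempty)
    (ℓ : ℝ) (hℓ : 0 < ℓ)
    (a : UpperHalfPlane ≃ᵢ UpperHalfPlane) (ha : a ∈ Γ)
    (haα : ∀ t : ℝ, a (α t) = α (t + ℓ))
    (b : UpperHalfPlane ≃ᵢ UpperHalfPlane) (hb : b ∈ Γ)
    (hbβ : ∀ t : ℝ, b (β t) = β (t + ℓ)) :
    ∀ s t : ℝ, Metric.infDist (α s) (Set.range β) ≤ 2 * ε →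
      Metric.infDist (α t) (Set.range β) ≤ 2 * ε →
      |s - t| < ℓ + 4 * ε := by
  intro s t h1 h2
  by_contra hcon
  push_neg at hcon
  rcases le_total s t with hst | hst
  · refine trap_aux ε hε Γ hsys α β hα hβ hne hint ℓ hℓ a ha haα b hb hbβ s t hst h1 h2 ?_
    rw [abs_of_nonpos (by linarith)] at hcon
    linarith
  · refine trap_aux ε hε Γ hsys α β hα hβ hne hint ℓ hℓ a ha haα b hb hbβ t s hst h2 h1 ?_
    rw [abs_of_nonneg (by linarith)] at hcon
    linarith
end

section
/- For any two distinct points x, y of the hyperbolic plane ℍ there exists a complete geodesic through them: an isometric embedding γ : ℝ → ℍ with γ(0) = x and γ(dist(x, y)) = y. Moreover this geodesic is unique up to reparametrization: if γ₁, γ₂ : ℝ → ℍ are complete geodesics whose images both contain x and y, then Set.range γ₁ = Set.range γ₂. -/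
open UpperHalfPlane Real

noncomputable def vpt (t : ℝ) : UpperHalfPlane := UpperHalfPlane.mk ⟨0, Real.exp t⟩ (Real.exp_pos t)

lemma dist_vpt (s t : ℝ) : dist (vpt s) (vpt t) = |s - t| := by
  have := (isometry_vertical_line 0).dist_eq s t
  simpa [Real.dist_eq, vpt] using this

lemma cosh_dist_vpt (a : ℝ) (z : UpperHalfPlane) :
    Real.cosh (dist (vpt a) z) = 1 + (z.re ^ 2 + (Real.exp a - z.im) ^ 2) / (2 * Real.exp a * z.im) := by
  have h1 : dist ((vpt a : ℂ)) (z : ℂ) ^ 2 = z.re ^ 2 + (Real.exp a - z.im) ^ 2 := by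
    rw [Complex.dist_eq_re_im, Real.sq_sqrt (by positivity),
      show ((vpt a : ℂ)).re = 0 from rfl, show ((vpt a : ℂ)).im = Real.exp a from rfl]
    simp only [UpperHalfPlane.coe_re, UpperHalfPlane.coe_im]
    ring
  rw [UpperHalfPlane.cosh_dist, h1, show (vpt a).im = Real.exp a from rfl]

lemma key (a b t : ℝ) (hb : 0 < b) (z : UpperHalfPlane)
    (h1 : dist (vpt a) z = |t|) (h2 : dist (vpt (a+b)) z = |t - b|) :
    z = vpt (a + t) := by
  have hv : 0 < z.im := z.im_pos
  have hA : (0:ℝ) < Real.exp a := Real.exp_pos a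
  have hB : (1:ℝ) < Real.exp b := by simpa using Real.exp_lt_exp.2 hb
  have hT : (0:ℝ) < Real.exp t := Real.exp_pos t
  have e1 : Real.exp t * (z.re ^ 2 + z.im ^ 2 + Real.exp a ^ 2)
      = Real.exp a * z.im * (Real.exp t ^ 2 + 1) := by
    have h := cosh_dist_vpt a z
    rw [h1, Real.cosh_abs, Real.cosh_eq, Real.exp_neg] at h
    field_simp at h
    linear_combination -h
  have e2 : Real.exp b * Real.exp t * (z.re ^ 2 + z.im ^ 2 + (Real.exp a * Real.exp b) ^ 2)
      = Real.exp a * Real.exp b * z.im * (Real.exp t ^ 2 + Real.exp b ^ 2) := by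
    have h := cosh_dist_vpt (a+b) z
    rw [h2, Real.cosh_abs, Real.cosh_eq, Real.exp_neg, Real.exp_sub, Real.exp_add] at h
    field_simp at h
    linear_combination -(Real.exp b) * h
  have hv' : z.im - Real.exp a * Real.exp t = 0 := by
    have h3 : (z.im - Real.exp a * Real.exp t)
        * (Real.exp a * Real.exp b * (Real.exp b ^ 2 - 1)) = 0 := by
      linear_combination Real.exp b * e1 - e2
    have hne : Real.exp a * Real.exp b * (Real.exp b ^ 2 - 1) ≠ 0 := by
      have : 0 < Real.exp b ^ 2 - 1 := by nlinarith
      positivity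
    exact (mul_eq_zero.1 h3).resolve_right hne
  have hr : z.re = 0 := by
    have h4 : Real.exp t * z.re ^ 2 = 0 := by
      linear_combination e1 + (Real.exp a - z.im * Real.exp t) * hv'
    have := (mul_eq_zero.1 h4).resolve_left (ne_of_gt hT)
    exact pow_eq_zero_iff two_ne_zero |>.1 this
  apply UpperHalfPlane.ext
  apply Complex.ext
  · exact hr
  · show (z : ℂ).im = Real.exp (a + t)
    have : z.im = Real.exp a * Real.exp t := by linarith
    rw [Real.exp_add]; exact this

lemma coe_smul_SL (g : Matrix.SpecialLinearGroup (Fin 2) ℝ) (z : UpperHalfPlane) :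
    ((g • z : UpperHalfPlane) : ℂ) = (g 0 0 * z + g 0 1)/(g 1 0 * z + g 1 1) := by
  rw [specialLinearGroup_apply]
  simp

lemma smul_re_eq (g : Matrix.SpecialLinearGroup (Fin 2) ℝ) (z : UpperHalfPlane) :
    (g • z).re = ((g 0 0 * z.re + g 0 1) * (g 1 0 * z.re + g 1 1) + g 0 0 * g 1 0 * z.im ^ 2)
      / Complex.normSq (g 1 0 * (z : ℂ) + g 1 1) := by
  rw [← UpperHalfPlane.coe_re, coe_smul_SL, Complex.div_re, ← add_div]
  congr 1
  simp only [Complex.add_re, Complex.mul_re, Complex.add_im, Complex.mul_im,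
    Complex.ofReal_re, Complex.ofReal_im, UpperHalfPlane.coe_re, UpperHalfPlane.coe_im]
  ring

lemma smul_im_eq (g : Matrix.SpecialLinearGroup (Fin 2) ℝ) (z : UpperHalfPlane) :
    (g • z).im = z.im / Complex.normSq (g 1 0 * (z : ℂ) + g 1 1) := by
  have hdet : g 0 0 * g 1 1 - g 0 1 * g 1 0 = 1 := by
    have := g.prop; rwa [Matrix.det_fin_two] at this
  rw [← UpperHalfPlane.coe_im, coe_smul_SL, Complex.div_im, div_sub_div_same]
  congr 1
  simp only [Complex.add_re, Complex.mul_re, Complex.add_im, Complex.mul_im,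
    Complex.ofReal_re, Complex.ofReal_im, UpperHalfPlane.coe_re, UpperHalfPlane.coe_im]
  linear_combination z.im * hdet

lemma exists_axis (x y : UpperHalfPlane) :
    ∃ g : Matrix.SpecialLinearGroup (Fin 2) ℝ, (g • x).re = 0 ∧ (g • y).re = 0 := by
  rcases eq_or_ne x.re y.re with h | h
  · refine ⟨⟨!![1, -x.re; 0, 1], by simp [Matrix.det_fin_two_of]⟩, ?_, ?_⟩ <;>
    · refine (smul_re_eq _ _).trans ?_
      convert zero_div _
      simp [h]
  · set c : ℝ := (x.re ^ 2 + x.im ^ 2 - y.re ^ 2 - y.im ^ 2) / (2 * (x.re - y.re)) with hc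
    have h2 : c * (2 * (x.re - y.re)) = x.re ^ 2 + x.im ^ 2 - y.re ^ 2 - y.im ^ 2 :=
      div_mul_cancel₀ _ (by simpa using sub_ne_zero.2 h)
    set ρ : ℝ := Real.sqrt ((x.re - c) ^ 2 + x.im ^ 2) with hρ
    have hρpos : 0 < ρ := Real.sqrt_pos.2 (by positivity)
    have hzx : (x.re - c) ^ 2 + x.im ^ 2 = ρ ^ 2 := (Real.sq_sqrt (by positivity)).symm
    have hzy : (y.re - c) ^ 2 + y.im ^ 2 = ρ ^ 2 := by linear_combination hzx + h2
    set k : ℝ := (Real.sqrt (2 * ρ))⁻¹ with hk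
    have hk2 : k ^ 2 * (2 * ρ) = 1 := by
      rw [hk, inv_pow, Real.sq_sqrt (by positivity)]
      field_simp
    refine ⟨⟨!![k, -(k * (c - ρ)); -k, k * (c + ρ)], by
        simp [Matrix.det_fin_two_of]; linear_combination hk2⟩, ?_, ?_⟩
    · refine (smul_re_eq _ _).trans ?_
      convert zero_div _
      simp
      linear_combination (-(k ^ 2)) * hzx
    · refine (smul_re_eq _ _).trans ?_
      convert zero_div _
      simp
      linear_combination (-(k ^ 2)) * hzy

lemma exists_g (x y : UpperHalfPlane) (hxy : x ≠ y) :
    ∃ (g : Matrix.SpecialLinearGroup (Fin 2) ℝ) (a : ℝ),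
      g • x = vpt a ∧ g • y = vpt (a + dist x y) := by
  obtain ⟨g₀, h1, h2⟩ := exists_axis x y
  have hne : (g₀ • x).im ≠ (g₀ • y).im := by
    intro h
    apply hxy
    refine MulAction.injective g₀ (UpperHalfPlane.ext (Complex.ext ?_ ?_))
    · simpa [UpperHalfPlane.coe_re] using h1.trans h2.symm
    · simpa [UpperHalfPlane.coe_im] using h
  obtain ⟨g, hg1, hg2, hg3⟩ :
      ∃ g : Matrix.SpecialLinearGroup (Fin 2) ℝ,
        (g • x).re = 0 ∧ (g • y).re = 0 ∧ (g • x).im < (g • y).im := by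
    rcases lt_or_gt_of_ne hne with hlt | hgt
    · exact ⟨g₀, h1, h2, hlt⟩
    · set S : Matrix.SpecialLinearGroup (Fin 2) ℝ :=
        ⟨!![0, -1; 1, 0], by simp [Matrix.det_fin_two_of]⟩ with hS
      have hre : ∀ w : UpperHalfPlane, w.re = 0 → (S • w).re = 0 := by
        intro w hw
        rw [smul_re_eq]
        convert zero_div _
        simp [hS, hw]
      have him : ∀ w : UpperHalfPlane, w.re = 0 → (S • w).im = (w.im)⁻¹ := by
        intro w hw
        have hns : Complex.normSq (S 1 0 * (w : ℂ) + S 1 1) = w.im * w.im := by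
          simp [hS, Complex.normSq_apply, hw]
        rw [smul_im_eq, hns]
        rw [div_eq_iff (by positivity)]
        field_simp
      refine ⟨S * g₀, ?_, ?_, ?_⟩
      · rw [mul_smul]; exact hre _ h1
      · rw [mul_smul]; exact hre _ h2
      · rw [mul_smul, mul_smul, him _ h1, him _ h2]
        exact inv_strictAnti₀ (im_pos _) hgt
  refine ⟨g, Real.log (g • x).im, ?_, ?_⟩
  · refine UpperHalfPlane.ext (Complex.ext ?_ ?_)
    · exact hg1
    · show (g • x).im = Real.exp (Real.log (g • x).im)
      exact (Real.exp_log (im_pos _)).symm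
  · have hlt : Real.log (g • x).im < Real.log (g • y).im :=
      Real.log_lt_log (im_pos _) hg3
    have hd : dist x y = Real.log (g • y).im - Real.log (g • x).im := by
      rw [← dist_smul g x y, UpperHalfPlane.dist_of_re_eq (hg1.trans hg2.symm), Real.dist_eq,
        abs_of_neg (by linarith)]
      ring
    have : Real.log (g • x).im + dist x y = Real.log (g • y).im := by linarith
    rw [this]
    refine UpperHalfPlane.ext (Complex.ext ?_ ?_)
    · exact hg2
    · show (g • y).im = Real.exp (Real.log (g • y).im)
      exact (Real.exp_log (im_pos _)).symm

lemma range_geodesic (g : Matrix.SpecialLinearGroup (Fin 2) ℝ) (a d : ℝ) (hd : 0 < d)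
    (γ : ℝ → UpperHalfPlane) (hγ : ∀ s t, dist (γ s) (γ t) = |s - t|) (s₁ s₂ : ℝ)
    (hx : g • γ s₁ = vpt a) (hy : g • γ s₂ = vpt (a + d)) :
    Set.range γ = Set.range (fun u => g⁻¹ • vpt u) := by
  have habs : |s₁ - s₂| = d := by
    rw [← hγ s₁ s₂, ← dist_smul g, hx, hy, dist_vpt,
      show a - (a + d) = -d by ring, abs_neg, abs_of_pos hd]
  have hε2 : ∀ t : ℝ, γ t = g⁻¹ • vpt (a + (if s₁ < s₂ then 1 else -1) * (t - s₁)) := by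
    intro t
    set ε : ℝ := if s₁ < s₂ then 1 else -1 with hε
    have hεabs : |ε| = 1 := by
      rw [hε]; split_ifs <;> simp
    have h1 : dist (vpt a) (g • γ t) = |ε * (t - s₁)| := by
      rw [← hx, dist_smul, hγ, abs_mul, hεabs, one_mul, abs_sub_comm]
    have h2 : dist (vpt (a + d)) (g • γ t) = |ε * (t - s₁) - d| := by
      rw [← hy, dist_smul, hγ]
      by_cases hlt : s₁ < s₂
      · have hd' : d = s₂ - s₁ := by rw [← habs, abs_of_neg (by linarith)]; ring
        rw [abs_sub_comm, hε, if_pos hlt, one_mul, hd']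
        congr 1
        ring
      · have hle : s₂ < s₁ := by
          rcases lt_or_eq_of_le (not_lt.1 hlt) with h | h
          · exact h
          · exfalso; rw [h] at habs; simp at habs; linarith
        have hd' : d = s₁ - s₂ := by rw [← habs, abs_of_pos (by linarith)]
        rw [hε, if_neg hlt]
        congr 1
        rw [hd']; ring
    have hk := key a d (ε * (t - s₁)) hd (g • γ t) h1 h2
    rw [← hk, inv_smul_smul]
  ext z
  simp only [Set.mem_range]
  constructor
  · rintro ⟨t, rfl⟩
    exact ⟨a + (if s₁ < s₂ then 1 else -1) * (t - s₁), (hε2 t).symm⟩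
  · rintro ⟨u, rfl⟩
    refine ⟨s₁ + (if s₁ < s₂ then 1 else -1) * (u - a), ?_⟩
    rw [hε2]
    congr 2
    split_ifs <;> ring

theorem geodesic_through_two_points_exists_unique
    (x y : UpperHalfPlane) (hxy : x ≠ y) :
    (∃ γ : ℝ → UpperHalfPlane,
      (∀ s t : ℝ, dist (γ s) (γ t) = |s - t|) ∧ γ 0 = x ∧ γ (dist x y) = y) ∧
    ∀ γ₁ γ₂ : ℝ → UpperHalfPlane,
      (∀ s t : ℝ, dist (γ₁ s) (γ₁ t) = |s - t|) →
      (∀ s t : ℝ, dist (γ₂ s) (γ₂ t) = |s - t|) →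
      x ∈ Set.range γ₁ → y ∈ Set.range γ₁ →
      x ∈ Set.range γ₂ → y ∈ Set.range γ₂ →
      Set.range γ₁ = Set.range γ₂ := by
  obtain ⟨g, a, hx, hy⟩ := exists_g x y hxy
  have hd : 0 < dist x y := dist_pos.2 hxy
  constructor
  · refine ⟨fun t => g⁻¹ • vpt (a + t), fun s t => ?_, ?_, ?_⟩
    · rw [dist_smul, dist_vpt, show a + s - (a + t) = s - t by ring]
    · show g⁻¹ • vpt (a + 0) = x
      rw [add_zero, ← hx, inv_smul_smul]
    · show g⁻¹ • vpt (a + dist x y) = y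
      rw [← hy, inv_smul_smul]
  · intro γ₁ γ₂ h₁ h₂ hx1 hy1 hx2 hy2
    obtain ⟨s₁, hs₁⟩ := hx1
    obtain ⟨s₂, hs₂⟩ := hy1
    obtain ⟨t₁, ht₁⟩ := hx2
    obtain ⟨t₂, ht₂⟩ := hy2
    rw [range_geodesic g a (dist x y) hd γ₁ h₁ s₁ s₂ (by rw [hs₁]; exact hx)
        (by rw [hs₂]; exact hy),
      range_geodesic g a (dist x y) hd γ₂ h₂ t₁ t₂ (by rw [ht₁]; exact hx)
        (by rw [ht₂]; exact hy)]
end
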